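/- Let n ≥ 3 and let λ be a partition of n with a_k parts equal to k. The average of the statistic baj over the conjugacy class C_λ equals (n+1)(n² − n + 2a_2 − a_1² + a_1)/12. -/

import Mathlib

/-- The conjugacy class of `S_n` consisting of permutations of cycle type `lam`
(Mathlib's `cycleType` omits fixed points, so we compare with the parts of `lam` not equal
to `1`). -/
noncomputable def conjClass (n : ℕ) (lam : n.Partition) : Finset (Equiv.Perm (Fin n)) :=
  Finset.univ.filter fun ω => ω.cycleType = Multiset.filter (fun i => i ≠ 1) lam.parts

/-- The successor of `i` in `Fin n`, computed modulo `n`. -/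
def succMod {n : ℕ} (i : Fin n) : Fin n := ⟨((i : ℕ) + 1) % n, Nat.mod_lt _ i.pos⟩

/-- The statistic `baj`: the sum of `i * (n - i)` over the (1-based) descent positions `i`.
A `0`-based position `i : Fin n` corresponds to the `1`-based position `i + 1`. -/
def baj {n : ℕ} (ω : Equiv.Perm (Fin n)) : ℕ :=
  ∑ i ∈ Finset.univ.filter (fun i : Fin n => (i : ℕ) + 1 < n ∧ ω (succMod i) < ω i),
    ((i : ℕ) + 1) * (n - ((i : ℕ) + 1))

open Equiv Finset

section Aux

variable {n : ℕ} (lam : n.Partition)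

/-- the pointwise indicator identity for the involution argument -/
lemma indicator_id (a b x y : Fin n) (hxy : x ≠ y) (hab : (b:ℕ) = (a:ℕ)+1) :
    (if y < x then 1 else 0) + (if Equiv.swap a b x < Equiv.swap a b y then 1 else 0)
      + (if x = a ∧ y = b then 1 else 0) = 1 + (if x = b ∧ y = a then 1 else 0) := by
  have hba : a ≠ b := by intro h; rw [h] at hab; omega
  have sw : ∀ z : Fin n, Equiv.swap a b z = if z = a then b else if z = b then a else z := by
    intro z
    rcases eq_or_ne z a with rfl|h1
    · simp
    rcases eq_or_ne z b with rfl|h2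
    · simp [hba.symm, Equiv.swap_apply_right]
    · rw [Equiv.swap_apply_of_ne_of_ne h1 h2, if_neg h1, if_neg h2]
  rw [sw x, sw y]
  split_ifs <;> simp only [Fin.lt_def, Fin.ext_iff] at * <;> omega

lemma conj_mem {g ω : Equiv.Perm (Fin n)} (h : ω ∈ conjClass n lam) :
    g * ω * g⁻¹ ∈ conjClass n lam := by
  simp only [conjClass, Finset.mem_filter, Finset.mem_univ, true_and] at *
  rw [Equiv.Perm.cycleType_conj, h]

lemma card_filter_conj (g : Equiv.Perm (Fin n)) (P : Equiv.Perm (Fin n) → Prop)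
    [DecidablePred P] :
    ((conjClass n lam).filter fun ω => P (g * ω * g⁻¹)).card
      = ((conjClass n lam).filter P).card := by
  apply Finset.card_nbij' (i := fun ω => g * ω * g⁻¹) (j := fun ω => g⁻¹ * ω * g)
  · intro ω hω
    rw [Finset.mem_coe, Finset.mem_filter] at hω ⊢
    exact ⟨conj_mem lam hω.1, hω.2⟩
  · intro ω hω
    rw [Finset.mem_coe, Finset.mem_filter] at hω ⊢
    constructor
    · have := conj_mem lam (g := g⁻¹) hω.1
      simpa using this
    · show P (g * (g⁻¹ * ω * g) * g⁻¹)
      have : g * (g⁻¹ * ω * g) * g⁻¹ = ω := by group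
      rw [this]; exact hω.2
  · intro ω _; group
  · intro ω _; group

/-- extend a pair of distinct points to a permutation -/
lemma pair_trans {a b a' b' : Fin n} (hab : a ≠ b) (hab' : a' ≠ b') :
    ∃ g : Equiv.Perm (Fin n), g a = a' ∧ g b = b' := by
  refine ⟨Equiv.swap (Equiv.swap a a' b) b' * Equiv.swap a a', ?_, ?_⟩
  · have h1 : Equiv.swap a a' b ≠ a' := by
      intro h
      have : Equiv.swap a a' b = Equiv.swap a a' a := by rw [h, Equiv.swap_apply_left]
      exact hab ((Equiv.swap a a').injective this.symm)
    simp only [Equiv.Perm.mul_apply, Equiv.swap_apply_left]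
    exact Equiv.swap_apply_of_ne_of_ne (Ne.symm h1) hab'
  · simp only [Equiv.Perm.mul_apply, Equiv.swap_apply_left]

lemma fixpair_const {a b a' b' : Fin n} (hab : a ≠ b) (hab' : a' ≠ b') :
    ((conjClass n lam).filter fun ω => ω a = a ∧ ω b = b).card
      = ((conjClass n lam).filter fun ω => ω a' = a' ∧ ω b' = b').card := by
  obtain ⟨g, hga, hgb⟩ := pair_trans hab hab'
  rw [← card_filter_conj lam g (fun ω => ω a' = a' ∧ ω b' = b')]
  congr 1
  apply Finset.filter_congr
  intro ω _
  subst hga hgb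
  simp [Equiv.Perm.mul_apply]

lemma swappair_const {a b a' b' : Fin n} (hab : a ≠ b) (hab' : a' ≠ b') :
    ((conjClass n lam).filter fun ω => ω a = b ∧ ω b = a).card
      = ((conjClass n lam).filter fun ω => ω a' = b' ∧ ω b' = a').card := by
  obtain ⟨g, hga, hgb⟩ := pair_trans hab hab'
  rw [← card_filter_conj lam g (fun ω => ω a' = b' ∧ ω b' = a')]
  congr 1
  apply Finset.filter_congr
  intro ω _
  subst hga hgb
  simp [Equiv.Perm.mul_apply]

lemma parts_filter_sum : (Multiset.filter (fun i => i ≠ 1) lam.parts).sum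
    + Multiset.count 1 lam.parts = n := by
  have h := Multiset.filter_add_not (fun i => i ≠ 1) lam.parts
  have h2 : Multiset.filter (fun i => ¬ i ≠ 1) lam.parts
      = Multiset.replicate (Multiset.count 1 lam.parts) 1 := by
    rw [show Multiset.filter (fun i => ¬ i ≠ 1) lam.parts
        = Multiset.filter (· = 1) lam.parts from
      Multiset.filter_congr (fun x _ => by simp)]
    exact Multiset.filter_eq' lam.parts 1
  have h3 := congrArg Multiset.sum h
  rw [Multiset.sum_add, h2, Multiset.sum_replicate, lam.parts_sum] at h3
  simpa using h3

lemma fixed_card {ω : Equiv.Perm (Fin n)} (h : ω ∈ conjClass n lam) :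
    (Finset.univ.filter fun a => ω a = a).card = Multiset.count 1 lam.parts := by
  have hmem : ω.cycleType = Multiset.filter (fun i => i ≠ 1) lam.parts := by
    simpa [conjClass] using h
  have hsupp : ω.support.card + Multiset.count 1 lam.parts = n := by
    rw [← Equiv.Perm.sum_cycleType, hmem]; exact parts_filter_sum lam
  have hc : (Finset.univ.filter fun a => ω a = a) = ω.supportᶜ := by
    ext a; simp [Equiv.Perm.mem_support]
  rw [hc, Finset.card_compl]
  simp only [Fintype.card_fin]
  omega

lemma cycleOf_two_iff {ω : Equiv.Perm (Fin n)} {a : Fin n} (ha : ω a ≠ a) :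
    (ω.cycleOf a).support.card = 2 ↔ ω (ω a) = a := by
  constructor
  · intro h
    obtain ⟨x, y, hxy, hswap⟩ := Equiv.Perm.card_support_eq_two.mp h
    have h1 : ω a = ω.cycleOf a a := (Equiv.Perm.cycleOf_apply_self ω a).symm
    have h2 : ω (ω a) = ω.cycleOf a (ω a) := by
      rw [Equiv.Perm.cycleOf_apply]
      rw [if_pos ⟨1, by simp⟩]
    rw [h2, h1, hswap, Equiv.swap_apply_self]
  · intro h2
    have hsc : ∀ y : Fin n, ω.SameCycle a y → y = a ∨ y = ω a := by
      intro y hy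
      obtain ⟨i, -, hi⟩ := hy.exists_pow_eq'
      have key : ∀ j : ℕ, (ω ^ j) a = a ∨ (ω ^ j) a = ω a := by
        intro j
        induction j with
        | zero => left; simp
        | succ k ih =>
          rw [pow_succ', Equiv.Perm.mul_apply]
          rcases ih with h' | h'
          · right; rw [h']
          · left; rw [h', h2]
      rcases key i with h' | h' <;> rw [hi] at h'
      · left; exact h'
      · right; exact h'
    have hset : (ω.cycleOf a).support = {a, ω a} := by
      ext y
      rw [Equiv.Perm.mem_support_cycleOf_iff]
      constructor
      · rintro ⟨hy, -⟩
        rcases hsc y hy with rfl | rfl <;> simp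
      · intro hy
        refine ⟨?_, Equiv.Perm.mem_support.mpr ha⟩
        rcases Finset.mem_insert.mp hy with rfl | hy'
        · exact Equiv.Perm.SameCycle.refl _ _
        · rw [Finset.mem_singleton] at hy'
          subst hy'
          exact ⟨1, by simp⟩
    rw [hset, Finset.card_insert_of_notMem (by simpa using Ne.symm ha), Finset.card_singleton]

lemma twocycle_card (ω : Equiv.Perm (Fin n)) :
    (Finset.univ.filter fun a => ω (ω a) = a ∧ ω a ≠ a).card = 2 * ω.cycleType.count 2 := by
  classical
  set t := ω.cycleFactorsFinset.filter (fun c => c.support.card = 2) with ht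
  set S := Finset.univ.filter fun a => ω (ω a) = a ∧ ω a ≠ a with hS
  have hcount : ω.cycleType.count 2 = t.card := by
    rw [Equiv.Perm.cycleType_def, Multiset.count_map, ht]
    rw [Finset.card, Finset.filter_val]
    congr 1
    apply Multiset.filter_congr
    intro x _
    simp [Function.comp, eq_comm]
  have hfib : ∀ a ∈ S, ω.cycleOf a ∈ t := by
    intro a haS
    rw [hS, Finset.mem_filter] at haS
    obtain ⟨-, h2, h1⟩ := haS
    rw [ht, Finset.mem_filter]
    exact ⟨Equiv.Perm.cycleOf_mem_cycleFactorsFinset_iff.mpr (Equiv.Perm.mem_support.mpr h1),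
      (cycleOf_two_iff h1).mpr h2⟩
  have hcards := Finset.card_eq_sum_card_fiberwise hfib
  have hfiber_eq : ∀ c ∈ t, (S.filter fun a => ω.cycleOf a = c) = c.support := by
    intro c hc
    rw [ht, Finset.mem_filter] at hc
    obtain ⟨hcf, hc2⟩ := hc
    ext x
    simp only [Finset.mem_filter, hS, Finset.mem_univ, true_and]
    constructor
    · rintro ⟨⟨h2, h1⟩, rfl⟩
      rw [Equiv.Perm.mem_support_cycleOf_iff]
      exact ⟨Equiv.Perm.SameCycle.refl _ _, Equiv.Perm.mem_support.mpr h1⟩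
    · intro hx
      have hcx := Equiv.Perm.cycle_is_cycleOf hx hcf
      have hx1 : ω x ≠ x := by
        have := (Equiv.Perm.mem_cycleFactorsFinset_iff.mp hcf).2 x hx
        rw [← this]
        exact Equiv.Perm.mem_support.mp hx
      refine ⟨⟨?_, hx1⟩, hcx.symm⟩
      exact (cycleOf_two_iff hx1).mp (by rw [← hcx]; exact hc2)
  rw [hcards, Finset.sum_congr rfl (fun c hc => by
    rw [hfiber_eq c hc, (Finset.mem_filter.mp hc).2])]
  rw [Finset.sum_const, smul_eq_mul, hcount, mul_comm]

end Aux

section Counts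

variable {n : ℕ} (lam : n.Partition)

lemma double_count (cond : Fin n → Fin n → Equiv.Perm (Fin n) → Prop)
    [∀ a b, DecidablePred (cond a b)] :
    ∑ p ∈ (Finset.univ : Finset (Fin n)).offDiag,
        ((conjClass n lam).filter fun ω => cond p.1 p.2 ω).card
      = ∑ ω ∈ conjClass n lam,
        ((Finset.univ : Finset (Fin n)).offDiag.filter fun p => cond p.1 p.2 ω).card := by
  simp only [Finset.card_filter]
  rw [Finset.sum_comm]

lemma count_fix_pairs (hn : 2 ≤ n) {a b : Fin n} (hab : a ≠ b) :
    n * (n - 1) * ((conjClass n lam).filter fun ω => ω a = a ∧ ω b = b).card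
      + Multiset.count 1 lam.parts * (conjClass n lam).card
      = (Multiset.count 1 lam.parts) ^ 2 * (conjClass n lam).card := by
  classical
  set a1 := Multiset.count 1 lam.parts with ha1
  have hdc := double_count lam (fun u v ω => ω u = u ∧ ω v = v)
  have hl : ∑ p ∈ (Finset.univ : Finset (Fin n)).offDiag,
        ((conjClass n lam).filter fun ω => ω p.1 = p.1 ∧ ω p.2 = p.2).card
      = (n * n - n) * ((conjClass n lam).filter fun ω => ω a = a ∧ ω b = b).card := by
    rw [Finset.sum_congr rfl
      (fun p hp => fixpair_const lam (Finset.mem_offDiag.mp hp).2.2 hab)]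
    rw [Finset.sum_const, Finset.offDiag_card, smul_eq_mul]
    simp [Finset.card_univ]
  have hr : ∀ ω ∈ conjClass n lam,
      ((Finset.univ : Finset (Fin n)).offDiag.filter fun p => ω p.1 = p.1 ∧ ω p.2 = p.2).card
        = a1 * a1 - a1 := by
    intro ω hω
    have he : ((Finset.univ : Finset (Fin n)).offDiag.filter
        fun p => ω p.1 = p.1 ∧ ω p.2 = p.2)
        = (Finset.univ.filter fun x => ω x = x).offDiag := by
      ext ⟨u, v⟩
      simp only [Finset.mem_filter, Finset.mem_offDiag, Finset.mem_univ, true_and]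
      tauto
    rw [he, Finset.offDiag_card, fixed_card lam hω]
  rw [hl, Finset.sum_congr rfl hr, Finset.sum_const, smul_eq_mul] at hdc
  have h1 : n ≤ n * n := Nat.le_mul_of_pos_left n (by omega)
  have h2 : a1 ≤ a1 * a1 := by
    rcases Nat.eq_zero_or_pos a1 with h | h
    · simp [h]
    · exact Nat.le_mul_of_pos_left a1 h
  zify [h1, h2, (show 1 ≤ n by omega)] at hdc ⊢
  linear_combination hdc

lemma count_swap_pairs (hn : 2 ≤ n) {a b : Fin n} (hab : a ≠ b) :
    n * (n - 1) * ((conjClass n lam).filter fun ω => ω a = b ∧ ω b = a).card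
      = 2 * Multiset.count 2 lam.parts * (conjClass n lam).card := by
  classical
  set a2 := Multiset.count 2 lam.parts with ha2
  have hdc := double_count lam (fun u v ω => ω u = v ∧ ω v = u)
  have hl : ∑ p ∈ (Finset.univ : Finset (Fin n)).offDiag,
        ((conjClass n lam).filter fun ω => ω p.1 = p.2 ∧ ω p.2 = p.1).card
      = (n * n - n) * ((conjClass n lam).filter fun ω => ω a = b ∧ ω b = a).card := by
    rw [Finset.sum_congr rfl
      (fun p hp => swappair_const lam (Finset.mem_offDiag.mp hp).2.2 hab)]
    rw [Finset.sum_const, Finset.offDiag_card, smul_eq_mul]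
    simp [Finset.card_univ]
  have hr : ∀ ω ∈ conjClass n lam,
      ((Finset.univ : Finset (Fin n)).offDiag.filter fun p => ω p.1 = p.2 ∧ ω p.2 = p.1).card
        = 2 * a2 := by
    intro ω hω
    have hb : ((Finset.univ : Finset (Fin n)).offDiag.filter
          fun p => ω p.1 = p.2 ∧ ω p.2 = p.1).card
        = (Finset.univ.filter fun x => ω (ω x) = x ∧ ω x ≠ x).card := by
      apply Finset.card_nbij' (i := Prod.fst) (j := fun x => (x, ω x))
      · rintro ⟨u, v⟩ hp
        rw [Finset.mem_coe, Finset.mem_filter, Finset.mem_offDiag] at hp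
        rw [Finset.mem_coe, Finset.mem_filter]
        obtain ⟨⟨-, -, huv⟩, h1, h2⟩ := hp
        exact ⟨Finset.mem_univ _, by rw [h1, h2], by rw [h1]; exact Ne.symm huv⟩
      · intro x hx
        rw [Finset.mem_coe, Finset.mem_filter] at hx
        rw [Finset.mem_coe, Finset.mem_filter, Finset.mem_offDiag]
        exact ⟨⟨Finset.mem_univ _, Finset.mem_univ _, Ne.symm hx.2.2⟩, rfl, hx.2.1⟩
      · rintro ⟨u, v⟩ hp
        rw [Finset.mem_coe, Finset.mem_filter] at hp
        simp [hp.2.1]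
      · intro x _
        rfl
    rw [hb, twocycle_card]
    have hmem : ω.cycleType = Multiset.filter (fun i => i ≠ 1) lam.parts := by
      simpa [conjClass] using hω
    rw [hmem, Multiset.count_filter]
    norm_num [ha2]
  rw [hl, Finset.sum_congr rfl hr, Finset.sum_const, smul_eq_mul] at hdc
  have h1 : n ≤ n * n := Nat.le_mul_of_pos_left n (by omega)
  zify [h1, (show 1 ≤ n by omega)] at hdc ⊢
  linear_combination hdc

lemma descent_count {a b : Fin n} (hab : (b : ℕ) = (a : ℕ) + 1) :
    2 * ((conjClass n lam).filter fun ω => ω b < ω a).card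
      + ((conjClass n lam).filter fun ω => ω a = a ∧ ω b = b).card
      = (conjClass n lam).card
        + ((conjClass n lam).filter fun ω => ω a = b ∧ ω b = a).card := by
  classical
  have hane : a ≠ b := by
    intro h; rw [h] at hab; omega
  have hconj := card_filter_conj lam (Equiv.swap a b) (fun ω => ω b < ω a)
  have hrw : ((conjClass n lam).filter fun ω =>
        (Equiv.swap a b * ω * (Equiv.swap a b)⁻¹) b < (Equiv.swap a b * ω * (Equiv.swap a b)⁻¹) a).card
      = ((conjClass n lam).filter fun ω =>
        Equiv.swap a b (ω a) < Equiv.swap a b (ω b)).card := by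
    congr 1
    apply Finset.filter_congr
    intro ω _
    simp [Equiv.Perm.mul_apply, Equiv.swap_apply_left, Equiv.swap_apply_right]
  have hD : ((conjClass n lam).filter fun ω => ω b < ω a).card
      = ((conjClass n lam).filter fun ω => Equiv.swap a b (ω a) < Equiv.swap a b (ω b)).card := by
    rw [← hconj, hrw]
  rw [two_mul]
  nth_rewrite 2 [hD]
  simp only [Finset.card_filter]
  rw [Finset.card_eq_sum_ones (conjClass n lam)]
  rw [← Finset.sum_add_distrib, ← Finset.sum_add_distrib, ← Finset.sum_add_distrib]
  apply Finset.sum_congr rfl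
  intro ω _
  exact indicator_id a b (ω a) (ω b) (fun h => hane (ω.injective h)) hab

end Counts

lemma gauss (m : ℕ) : 2 * ∑ i ∈ Finset.range m, (i + 1) = m * (m + 1) := by
  induction m with
  | zero => simp
  | succ k ih => rw [Finset.sum_range_succ, Nat.mul_add, ih]; ring

lemma sum_w (m : ℕ) : 6 * ∑ i ∈ Finset.range m, (i + 1) * (m - i) = m * (m + 1) * (m + 2) := by
  induction m with
  | zero => simp
  | succ k ih =>
    have h1 : ∑ i ∈ Finset.range (k + 1), (i + 1) * (k + 1 - i)
        = (∑ i ∈ Finset.range k, (i + 1) * (k - i)) + (∑ i ∈ Finset.range k, (i + 1))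
          + (k + 1) := by
      rw [Finset.sum_range_succ]
      have hc : ∀ i ∈ Finset.range k, (i + 1) * (k + 1 - i) = (i + 1) * (k - i) + (i + 1) := by
        intro i hi
        rw [Finset.mem_range] at hi
        have h : k + 1 - i = (k - i) + 1 := by omega
        rw [h, Nat.mul_add, Nat.mul_one]
      rw [Finset.sum_congr rfl hc, Finset.sum_add_distrib]
      have h2 : k + 1 - k = 1 := by omega
      rw [h2, Nat.mul_one]
    have hg := gauss k
    calc 6 * ∑ i ∈ Finset.range (k + 1), (i + 1) * (k + 1 - i)
        = 6 * (∑ i ∈ Finset.range k, (i + 1) * (k - i))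
          + 3 * (2 * ∑ i ∈ Finset.range k, (i + 1)) + 6 * (k + 1) := by rw [h1]; ring
      _ = k * (k + 1) * (k + 2) + 3 * (k * (k + 1)) + 6 * (k + 1) := by rw [ih, hg]
      _ = (k + 1) * (k + 1 + 1) * (k + 1 + 2) := by ring

lemma conjClass_nonempty {n : ℕ} (lam : n.Partition) : (conjClass n lam).Nonempty := by
  have hcond : (Multiset.filter (fun i => i ≠ 1) lam.parts).sum ≤ Fintype.card (Fin n)
      ∧ ∀ a ∈ Multiset.filter (fun i => i ≠ 1) lam.parts, 2 ≤ a := by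
    constructor
    · rw [Fintype.card_fin]
      have := parts_filter_sum lam
      omega
    · intro a ha
      rw [Multiset.mem_filter] at ha
      have := lam.parts_pos ha.1
      omega
  obtain ⟨g, hg⟩ := (Equiv.Perm.exists_with_cycleType_iff (Fin n)).mpr hcond
  exact ⟨g, by simp [conjClass, hg]⟩

theorem stmt8 (n : ℕ) (hn : 3 ≤ n) (lam : n.Partition) (a1 a2 : ℕ)
    (ha1 : a1 = Multiset.count 1 lam.parts) (ha2 : a2 = Multiset.count 2 lam.parts) :
    (∑ ω ∈ conjClass n lam, (baj ω : ℝ)) / ((conjClass n lam).card : ℝ)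
      = ((n : ℝ) + 1) * ((n : ℝ) ^ 2 - (n : ℝ) + 2 * (a2 : ℝ) - (a1 : ℝ) ^ 2 + (a1 : ℝ))
        / 12 := by
  classical
  have ha0b0 : (0 : ℕ) < n ∧ (1 : ℕ) < n := by omega
  set a0 : Fin n := ⟨0, ha0b0.1⟩ with ha0
  set b0 : Fin n := ⟨1, ha0b0.2⟩ with hb0
  have hne0 : a0 ≠ b0 := by simp [ha0, hb0, Fin.ext_iff]
  set N := (conjClass n lam).card with hN
  set T := ((conjClass n lam).filter fun ω => ω a0 = a0 ∧ ω b0 = b0).card with hT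
  set P := ((conjClass n lam).filter fun ω => ω a0 = b0 ∧ ω b0 = a0).card with hP
  have hNpos : 0 < N := Finset.card_pos.mpr (conjClass_nonempty lam)
  have hTfact : n * (n - 1) * T + a1 * N = a1 ^ 2 * N := by
    rw [ha1]; exact count_fix_pairs lam (by omega) hne0
  have hPfact : n * (n - 1) * P = 2 * a2 * N := by
    rw [ha2]; exact count_swap_pairs lam (by omega) hne0
  have hpos : ∀ i : Fin n, (i : ℕ) + 1 < n →
      2 * ((conjClass n lam).filter fun ω => ω (succMod i) < ω i).card + T = N + P := by
    intro i hi
    have hsm : ((succMod i : Fin n) : ℕ) = (i : ℕ) + 1 := Nat.mod_eq_of_lt hi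
    have hine : i ≠ succMod i := by
      intro h
      have := congrArg Fin.val h
      rw [hsm] at this
      omega
    have h := descent_count lam (a := i) (b := succMod i) hsm
    rw [fixpair_const lam hine hne0, swappair_const lam hine hne0] at h
    exact h
  set B := ∑ ω ∈ conjClass n lam, baj ω with hB
  set W := ∑ i ∈ Finset.range (n - 1), (i + 1) * (n - 1 - i) with hW
  have hB2 : B = ∑ i : Fin n, (if ((i : ℕ) + 1 < n) then
      (((conjClass n lam).filter fun ω => ω (succMod i) < ω i).card
        * (((i : ℕ) + 1) * (n - ((i : ℕ) + 1)))) else 0) := by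
    rw [hB]
    have hbj : ∀ ω : Equiv.Perm (Fin n), baj ω = ∑ i : Fin n,
        (if ((i : ℕ) + 1 < n ∧ ω (succMod i) < ω i)
          then (((i : ℕ) + 1) * (n - ((i : ℕ) + 1))) else 0) := by
      intro ω; rw [baj, Finset.sum_filter]
    rw [Finset.sum_congr rfl (fun ω _ => hbj ω), Finset.sum_comm]
    apply Finset.sum_congr rfl
    intro i _
    by_cases hi : (i : ℕ) + 1 < n
    · rw [if_pos hi, ← Finset.sum_filter]
      rw [Finset.filter_congr (fun ω _ => by simp [hi] :
        ∀ ω ∈ conjClass n lam, ((i : ℕ) + 1 < n ∧ ω (succMod i) < ω i) ↔ (ω (succMod i) < ω i))]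
      rw [Finset.sum_const, smul_eq_mul]
    · simp [hi]
  have hWfin : ∑ i : Fin n, (if ((i : ℕ) + 1 < n)
      then (((i : ℕ) + 1) * (n - ((i : ℕ) + 1))) else 0) = W := by
    rw [Fin.sum_univ_eq_sum_range (fun k => if (k + 1 < n) then ((k + 1) * (n - (k + 1))) else 0) n]
    rw [← Finset.sum_subset (Finset.range_subset_range.mpr (by omega : n - 1 ≤ n))
      (fun x _ hx => by rw [Finset.mem_range] at hx; rw [if_neg]; omega)]
    rw [hW]
    apply Finset.sum_congr rfl
    intro k hk
    rw [Finset.mem_range] at hk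
    rw [if_pos (by omega)]
    congr 1
    omega
  have hBW : 2 * B + T * W = (N + P) * W := by
    have e1 : 2 * B + T * W = ∑ i : Fin n, (if ((i : ℕ) + 1 < n) then
        ((2 * ((conjClass n lam).filter fun ω => ω (succMod i) < ω i).card + T)
          * (((i : ℕ) + 1) * (n - ((i : ℕ) + 1)))) else 0) := by
      rw [hB2, ← hWfin, Finset.mul_sum, Finset.mul_sum, ← Finset.sum_add_distrib]
      apply Finset.sum_congr rfl
      intro i _
      by_cases hi : (i : ℕ) + 1 < n
      · rw [if_pos hi, if_pos hi, if_pos hi]; ring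
      · rw [if_neg hi, if_neg hi, if_neg hi]; ring
    have e2 : (N + P) * W = ∑ i : Fin n, (if ((i : ℕ) + 1 < n) then
        ((N + P) * (((i : ℕ) + 1) * (n - ((i : ℕ) + 1)))) else 0) := by
      rw [← hWfin, Finset.mul_sum]
      apply Finset.sum_congr rfl
      intro i _
      by_cases hi : (i : ℕ) + 1 < n
      · rw [if_pos hi, if_pos hi]
      · rw [if_neg hi, if_neg hi]; ring
    rw [e1, e2]
    apply Finset.sum_congr rfl
    intro i _
    by_cases hi : (i : ℕ) + 1 < n
    · rw [if_pos hi, if_pos hi, hpos i hi]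
    · rw [if_neg hi, if_neg hi]
  have hW6 : 6 * W = (n - 1) * n * (n + 1) := by
    rw [hW, sum_w (n - 1), (show n - 1 + 1 = n by omega), (show n - 1 + 2 = n + 1 by omega)]
  -- pass to the reals
  have hNne : (N : ℝ) ≠ 0 := Nat.cast_ne_zero.mpr (by omega)
  have r1 : 2 * (B : ℝ) + (T : ℝ) * (W : ℝ) = ((N : ℝ) + (P : ℝ)) * (W : ℝ) := by
    exact_mod_cast hBW
  have r2 : (n : ℝ) * ((n : ℝ) - 1) * (T : ℝ) + (a1 : ℝ) * (N : ℝ)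
      = (a1 : ℝ) ^ 2 * (N : ℝ) := by
    zify [(show 1 ≤ n by omega)] at hTfact
    exact_mod_cast hTfact
  have r3 : (n : ℝ) * ((n : ℝ) - 1) * (P : ℝ) = 2 * (a2 : ℝ) * (N : ℝ) := by
    zify [(show 1 ≤ n by omega)] at hPfact
    exact_mod_cast hPfact
  have r4 : 6 * (W : ℝ) = ((n : ℝ) - 1) * (n : ℝ) * ((n : ℝ) + 1) := by
    zify [(show 1 ≤ n by omega)] at hW6
    exact_mod_cast hW6
  have hBcast : (∑ ω ∈ conjClass n lam, (baj ω : ℝ)) = (B : ℝ) := by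
    rw [hB]; push_cast; rfl
  rw [hBcast, div_eq_div_iff hNne (by norm_num : (12 : ℝ) ≠ 0)]
  have hnn : (n : ℝ) * ((n : ℝ) - 1) ≠ 0 := by
    have h3 : (3 : ℝ) ≤ (n : ℝ) := by exact_mod_cast hn
    have : (n : ℝ) > 0 := by linarith
    have : (n : ℝ) - 1 > 0 := by linarith
    positivity
  apply mul_right_cancel₀ hnn
  linear_combination (6 * (n : ℝ) * ((n : ℝ) - 1)) * r1
    + ((n : ℝ) * ((n : ℝ) - 1) * (N : ℝ) + (n : ℝ) * ((n : ℝ) - 1) * (P : ℝ)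
        - (n : ℝ) * ((n : ℝ) - 1) * (T : ℝ)) * r4
    + (((n : ℝ) + 1) * ((n : ℝ) * ((n : ℝ) - 1))) * r3
    - (((n : ℝ) + 1) * ((n : ℝ) * ((n : ℝ) - 1))) * r2
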